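/- arXiv:0704.2395 — 2 statements merged into one kernel-verified Lean document; each statement's English description precedes it below -/
import Mathlib

section
/- Let η be a positive bounded function, decreasing on [0,∞), such that x ↦ η(|x|) is summable on ℝ^d. Then there exists a constant K, depending only on η and d, such that Σ_{k∈ℤ^d} η(|x+k|) η(|y+k|) ≤ K η(|x−y|/8) for all x, y ∈ ℝ^d. -/
open MeasureTheory Complex Filter Finset

noncomputable section

/-- `ℝ^d`. -/
abbrev Vec (d : ℕ) := Fin d → ℝ

variable {d : ℕ}

/-- Real version of an integer matrix. -/
def MR (M : Matrix (Fin d) (Fin d) ℤ) : Matrix (Fin d) (Fin d) ℝ := M.map Int.cast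

/-- All eigenvalues of `M` are greater than 1 in modulus. -/
def Expanding (M : Matrix (Fin d) (Fin d) ℤ) : Prop :=
  ∀ z : ℂ, (Matrix.charpoly (M.map (Int.cast : ℤ → ℂ))).IsRoot z → 1 < ‖z‖

/-- `ψ_{jk}(x) = m^{j/2} ψ (M^j x + k)`, where `m = |det M|`. -/
def wave (M : Matrix (Fin d) (Fin d) ℤ) (ψ : Vec d → ℂ) (j : ℤ) (k : Fin d → ℤ)
    (x : Vec d) : ℂ :=
  (Real.sqrt ((M.det.natAbs : ℝ) ^ j) : ℝ) * ψ ((MR M ^ j).mulVec x + fun i => (k i : ℝ))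

/-- `L²` inner product of plain functions, `⟨f,g⟩ = ∫ f conj g`. -/
def ip (f g : Vec d → ℂ) : ℂ := ∫ x : Vec d, f x * (starRingEnd ℂ) (g x)

/-- Square of the `L²` norm. -/
def sqnorm (f : Vec d → ℂ) : ℝ := ∫ x : Vec d, ‖f x‖ ^ 2

/-- The Euclidean norm `|x|` on `ℝ^d`. -/
def euclNorm (x : Vec d) : ℝ := Real.sqrt (∑ i, x i ^ 2)

/-- Fourier transform `f̂(x) = ∫ f(t) e^{-2πi(t,x)} dt`. -/
def FT (f : Vec d → ℂ) (x : Vec d) : ℂ :=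
  ∫ t : Vec d, f t * Complex.exp ((-2 * Real.pi * (∑ i, t i * x i) : ℝ) * Complex.I)

/-- Partial derivative in direction `i`. -/
def pd (i : Fin d) (f : Vec d → ℂ) : Vec d → ℂ := fun x => fderiv ℝ f x (Pi.single i 1)

/-- Mixed partial derivative `D^β`. -/
def mderiv (β : Fin d → ℕ) (f : Vec d → ℂ) : Vec d → ℂ :=
  ((List.ofFn fun i : Fin d => (pd i)^[β i]).foldl (· ∘ ·) id) f

/-- `[β] = β₁ + … + β_d`. -/
def misize (β : Fin d → ℕ) : ℕ := ∑ i, β i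

/-- Multi-index binomial coefficient. -/
def mchoose (β γ : Fin d → ℕ) : ℕ := ∏ i, Nat.choose (β i) (γ i)

/-- Multi-index power `a^β` for `a ∈ ℂ^d`. -/
def cpow (a : Fin d → ℂ) (β : Fin d → ℕ) : ℂ := ∏ i, a i ^ β i

/-- `s` is a complete set of digits (coset representatives of `ℤ^d / M ℤ^d`) with `s 0 = 0`. -/
def Digits (M : Matrix (Fin d) (Fin d) ℤ) (m : ℕ) (s : Fin m → Fin d → ℤ) : Prop :=
  (∀ h : 0 < m, s ⟨0, h⟩ = 0) ∧
    ∀ l : Fin d → ℤ, ∃! k : Fin m, ∃ c : Fin d → ℤ, l = s k + M.mulVec c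

/-- The mask with the given polyphase representatives:
`m_ν(x) = m^{-1/2} ∑_k e^{2πi(s_k,x)} μ_{νk}(M* x)`. -/
def maskOf (M : Matrix (Fin d) (Fin d) ℤ) {m : ℕ} (s : Fin m → Fin d → ℤ)
    (μrow : Fin m → Vec d → ℂ) (x : Vec d) : ℂ :=
  (1 / Real.sqrt m : ℝ) * ∑ k : Fin m,
    Complex.exp ((2 * Real.pi * (∑ i, (s k i : ℝ) * x i) : ℝ) * Complex.I) *
      μrow k ((MR M).transpose.mulVec x)

/-- `(M*)⁻¹` as a real matrix. -/
def MsInv (M : Matrix (Fin d) (Fin d) ℤ) : Matrix (Fin d) (Fin d) ℝ := ((MR M).transpose)⁻¹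

/-- `M⁻¹ s` as a real vector. -/
def MinvS (M : Matrix (Fin d) (Fin d) ℤ) (sk : Fin d → ℤ) : Fin d → ℝ :=
  (MR M)⁻¹.mulVec fun i => (sk i : ℝ)

/-- The vector `-2πi M⁻¹ s_k` in `ℂ^d`. -/
def mvec (M : Matrix (Fin d) (Fin d) ℤ) (sk : Fin d → ℤ) : Fin d → ℂ :=
  fun i => (-2 * Real.pi * Complex.I) * ((MinvS M sk i : ℝ) : ℂ)

/-- Condition (0): `D^β μ₀ₖ(0) = m^{-1/2} ∑_{0≤γ≤β} λ_γ (β choose γ) (-2πi M⁻¹ s_k)^{β-γ}`. -/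
def PolyCond (M : Matrix (Fin d) (Fin d) ℤ) {m : ℕ} (s : Fin m → Fin d → ℤ)
    (lam : (Fin d → ℕ) → ℂ) (β : Fin d → ℕ) (k : Fin m) (μ0k : Vec d → ℂ) : Prop :=
  mderiv β μ0k 0 = ((1 / Real.sqrt m : ℝ) : ℂ) *
    ∑ γ ∈ Finset.Iic β, lam γ * (mchoose β γ : ℂ) * cpow (mvec M (s k)) (β - γ)

/-- 1-periodicity in each variable. -/
def Per1 (f : Vec d → ℂ) : Prop :=
  ∀ (x : Vec d) (k : Fin d → ℤ), f (x + fun i => (k i : ℝ)) = f x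

/-- The class `L_∞^{(n)}`: 1-periodic, essentially bounded, with continuous partial
derivatives up to order `n` at the origin. -/
def LinftyN (n : ℕ) (f : Vec d → ℂ) : Prop :=
  Per1 f ∧ (∃ C : ℝ, ∀ᵐ x : Vec d, ‖f x‖ ≤ C) ∧
    (∀ β : Fin d → ℕ, misize β < n → DifferentiableAt ℝ (mderiv β f) 0) ∧
    (∀ β : Fin d → ℕ, misize β ≤ n → ContinuousAt (mderiv β f) 0)

/-- Trigonometric polynomial: finite linear combination of `e^{2πi(k,x)}`, `k ∈ ℤ^d`. -/
def TrigPoly (f : Vec d → ℂ) : Prop :=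
  ∃ (S : Finset (Fin d → ℤ)) (c : (Fin d → ℤ) → ℂ), ∀ x,
    f x = ∑ k ∈ S, c k * Complex.exp ((2 * Real.pi * (∑ i, (k i : ℝ) * x i) : ℝ) * Complex.I)

/-- Partial sum `∑_{i<j} ∑_{k∈ℤ^d} ∑_ν ⟨f, ψ̃_{ik}^{(ν)}⟩ ψ_{ik}^{(ν)}(x)` of the frame
decomposition. -/
def framePartial (M : Matrix (Fin d) (Fin d) ℤ) {r : ℕ} (ψ ψt : Fin r → Vec d → ℂ)
    (f : Vec d → ℂ) (j : ℤ) (x : Vec d) : ℂ :=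
  ∑' (i : {i : ℤ // i < j}) (k : Fin d → ℤ) (ν : Fin r),
    ip f (wave M (ψt ν) i k) * wave M (ψ ν) i k x

/-- Square of the Sobolev `W₂ⁿ` norm (for a function with classical derivatives). -/
def sobNormSq (n : ℕ) (f : Vec d → ℂ) : ℝ :=
  ∑ β ∈ (Finset.Iic (fun _ : Fin d => n)).filter (fun β => misize β ≤ n),
    sqnorm (mderiv β f)


section Statement2Aux

variable {d : ℕ}

lemma euclNorm_eq_norm (x : Vec d) :
    euclNorm x = ‖(WithLp.equiv 2 (Fin d → ℝ)).symm x‖ := by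
  rw [EuclideanSpace.norm_eq]
  simp [euclNorm, sq_abs]

lemma euclNorm_nonneg (x : Vec d) : 0 ≤ euclNorm x := Real.sqrt_nonneg _

lemma euclNorm_add_le (x y : Vec d) : euclNorm (x + y) ≤ euclNorm x + euclNorm y := by
  simp only [euclNorm_eq_norm]
  exact norm_add_le ((WithLp.equiv 2 (Fin d → ℝ)).symm x) ((WithLp.equiv 2 (Fin d → ℝ)).symm y)

lemma euclNorm_neg (x : Vec d) : euclNorm (-x) = euclNorm x := by simp [euclNorm]

lemma euclNorm_smul (c : ℝ) (x : Vec d) : euclNorm (c • x) = |c| * euclNorm x := by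
  simp only [euclNorm_eq_norm]
  simpa [Real.norm_eq_abs] using norm_smul c ((WithLp.equiv 2 (Fin d → ℝ)).symm x)

lemma continuous_euclNorm : Continuous (euclNorm (d := d)) :=
  Real.continuous_sqrt.comp (continuous_finset_sum _ fun i _ => (continuous_apply i).pow 2)

lemma abs_apply_le_euclNorm (x : Vec d) (i : Fin d) : |x i| ≤ euclNorm x := by
  rw [← Real.sqrt_sq_eq_abs]
  exact Real.sqrt_le_sqrt (Finset.single_le_sum (fun j _ => sq_nonneg (x j)) (mem_univ i))

lemma sum_bound (η : ℝ → ℝ)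
    (hpos : ∀ t, 0 ≤ t → 0 < η t)
    (hmono : AntitoneOn η (Set.Ici 0))
    (hint : Integrable (fun x : Vec d => η (euclNorm x)) (volume : Measure (Vec d))) :
    ∃ C : ℝ, 0 ≤ C ∧ ∀ x : Vec d,
      Summable (fun k : Fin d → ℤ => η (euclNorm (x + fun i => (k i : ℝ)))) ∧
      (∑' k : Fin d → ℤ, η (euclNorm (x + fun i => (k i : ℝ)))) ≤ C := by
  classical
  set η' : ℝ → ℝ := fun t => η (max t 0) with hη'def
  have hη'anti : Antitone η' := fun a b hab =>
    hmono (le_max_right a 0) (le_max_right b 0) (max_le_max hab le_rfl)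
  have hη'pos : ∀ t, 0 < η' t := fun t => hpos _ (le_max_right _ _)
  have hη'le : ∀ t, η' t ≤ η 0 :=
    fun t => hmono (le_refl (0:ℝ)) (le_max_right t 0) (le_max_right t 0)
  have hη'eq : ∀ t, 0 ≤ t → η' t = η t := fun t ht => by simp [hη'def, max_eq_left ht]
  set sd : ℝ := Real.sqrt d with hsddef
  have hsd0 : 0 ≤ sd := Real.sqrt_nonneg _
  set g : Vec d → ℝ := fun u => η' (euclNorm u - sd) with hgdef
  have hgmeas : Measurable g :=
    hη'anti.measurable.comp (continuous_euclNorm.measurable.sub measurable_const)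
  -- integrability of g
  have hS : MeasurableSet {u : Vec d | euclNorm u ≤ 2 * sd} :=
    continuous_euclNorm.measurable measurableSet_Iic
  have hSfin : volume {u : Vec d | euclNorm u ≤ 2 * sd} < ⊤ := by
    refine lt_of_le_of_lt (measure_mono ?_) (measure_closedBall_lt_top (x := (0 : Vec d)) (r := 2 * sd))
    intro u hu
    simp only [Metric.mem_closedBall, dist_zero_right]
    rw [pi_norm_le_iff_of_nonneg (by positivity)]
    exact fun i => le_trans (abs_apply_le_euclNorm u i) hu
  have h1 : Integrable ((({u : Vec d | euclNorm u ≤ 2 * sd}).indicator (fun _ => η 0)))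
      (volume : Measure (Vec d)) := by
    rw [integrable_indicator_iff hS]
    exact (integrableOn_const_iff).mpr (Or.inr hSfin)
  have h2 : Integrable (fun u : Vec d => η' (euclNorm u / 2)) (volume : Measure (Vec d)) := by
    have heq : (fun u : Vec d => η' (euclNorm u / 2))
        = fun u : Vec d => η (euclNorm ((2⁻¹ : ℝ) • u)) := by
      funext u
      rw [euclNorm_smul, hη'eq _ (div_nonneg (euclNorm_nonneg u) two_pos.le)]
      congr 1
      rw [abs_of_pos (by norm_num : (0:ℝ) < 2⁻¹)]
      ring
    rw [heq]
    exact (integrable_comp_smul_iff (volume : Measure (Vec d))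
      (fun v : Vec d => η (euclNorm v)) (by norm_num : (2⁻¹ : ℝ) ≠ 0)).mpr hint
  have hg_int : Integrable g (volume : Measure (Vec d)) := by
    refine Integrable.mono' (h1.add h2) hgmeas.aestronglyMeasurable (ae_of_all _ fun u => ?_)
    rw [Real.norm_eq_abs, abs_of_pos (hη'pos _)]
    by_cases hu : euclNorm u ≤ 2 * sd
    · have : g u ≤ η 0 := hη'le _
      have hind : ({u : Vec d | euclNorm u ≤ 2 * sd}).indicator (fun _ => η 0) u = η 0 :=
        Set.indicator_of_mem (show u ∈ {v : Vec d | euclNorm v ≤ 2 * sd} from hu) _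
      simp only [Pi.add_apply, hind]
      exact le_add_of_le_of_nonneg this (hη'pos _).le
    · have hle2 : euclNorm u / 2 ≤ euclNorm u - sd := by
        push_neg at hu; linarith
      have : g u ≤ η' (euclNorm u / 2) := hη'anti hle2
      have hind : ({u : Vec d | euclNorm u ≤ 2 * sd}).indicator (fun _ => η 0) u = 0 :=
        Set.indicator_of_notMem (show u ∉ {v : Vec d | euclNorm v ≤ 2 * sd} from hu) _
      simp only [Pi.add_apply, hind]
      linarith
  refine ⟨∫ u, g u, integral_nonneg fun u => (hη'pos _).le, fun x => ?_⟩
  -- boxes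
  set Box : (Fin d → ℤ) → Set (Vec d) :=
    fun k => Set.univ.pi fun i => Set.Ico (k i : ℝ) (k i + 1) with hBoxdef
  have hBoxMeas : ∀ k, MeasurableSet (Box k) :=
    fun k => MeasurableSet.univ_pi fun i => measurableSet_Ico
  have hBoxDisj : Pairwise (Function.onFun Disjoint Box) := by
    intro k l hkl
    rw [Function.onFun, Set.disjoint_left]
    intro u hu hv
    apply hkl
    funext i
    have h1 := hu i (Set.mem_univ i)
    have h2 := hv i (Set.mem_univ i)
    have e1 : ⌊u i⌋ = k i := Int.floor_eq_iff.mpr ⟨h1.1, by exact_mod_cast h1.2⟩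
    have e2 : ⌊u i⌋ = l i := Int.floor_eq_iff.mpr ⟨h2.1, by exact_mod_cast h2.2⟩
    rw [← e1, e2]
  have hBoxUnion : (⋃ k, Box k) = Set.univ := by
    ext u
    simp only [Set.mem_iUnion, Set.mem_univ, iff_true]
    refine ⟨fun i => ⌊u i⌋, fun i _ => ?_⟩
    exact ⟨Int.floor_le _, Int.lt_floor_add_one _⟩
  have hBoxVol : ∀ k, volume (Box k) = 1 := by
    intro k
    rw [hBoxdef, volume_pi_pi]
    simp [Real.volume_Ico]
  set G : Vec d → ℝ := fun u => g (x + u) with hGdef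
  have hG_int : Integrable G (volume : Measure (Vec d)) := hg_int.comp_add_left x
  have hHasSum : HasSum (fun k => ∫ u in Box k, G u) (∫ u, G u) := by
    have := hasSum_integral_iUnion hBoxMeas hBoxDisj
      (hBoxUnion ▸ hG_int.integrableOn : IntegrableOn G (⋃ k, Box k) volume)
    rwa [hBoxUnion, setIntegral_univ] at this
  have hCint : (∫ u, G u) = ∫ u, g u := integral_add_left_eq_self g x
  have hle : ∀ k : Fin d → ℤ,
      η (euclNorm (x + fun i => (k i : ℝ))) ≤ ∫ u in Box k, G u := by
    intro k
    set kr : Vec d := fun i => (k i : ℝ) with hkrdef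
    have key : ∀ u ∈ Box k, η (euclNorm (x + kr)) ≤ G u := by
      intro u hu
      have h1 : euclNorm (u - kr) ≤ sd := by
        rw [euclNorm, hsddef]
        apply Real.sqrt_le_sqrt
        calc ∑ i, (u - kr) i ^ 2 ≤ ∑ _i : Fin d, (1:ℝ) := by
              refine Finset.sum_le_sum fun i _ => ?_
              have hui := hu i (Set.mem_univ i)
              have : (u - kr) i = u i - (k i : ℝ) := rfl
              rw [this]
              nlinarith [hui.1, hui.2]
          _ = (d : ℝ) := by simp
      have h2 : euclNorm (x + u) ≤ euclNorm (x + kr) + sd := by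
        have : x + u = (x + kr) + (u - kr) := by abel
        rw [this]
        exact le_trans (euclNorm_add_le _ _) (by linarith [euclNorm_add_le (x + kr) (u - kr)])
      show η (euclNorm (x + kr)) ≤ η' (euclNorm (x + u) - sd)
      have hmax : max (euclNorm (x + u) - sd) 0 ≤ euclNorm (x + kr) :=
        max_le (by linarith) (euclNorm_nonneg _)
      exact hmono (Set.mem_Ici.mpr (le_max_right _ _)) (euclNorm_nonneg _) hmax
    have hmono' : ∫ u in Box k, η (euclNorm (x + kr)) ∂volume ≤ ∫ u in Box k, G u := by
      refine setIntegral_mono_on ?_ hG_int.integrableOn (hBoxMeas k) key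
      exact (integrableOn_const_iff).mpr (Or.inr ((hBoxVol k) ▸ ENNReal.one_lt_top))
    rwa [setIntegral_const, measureReal_def, hBoxVol, ENNReal.toReal_one, one_smul] at hmono'
  have hnn : ∀ k : Fin d → ℤ, 0 ≤ η (euclNorm (x + fun i => (k i : ℝ))) :=
    fun k => (hpos _ (euclNorm_nonneg _)).le
  have hsummable : Summable (fun k : Fin d → ℤ => η (euclNorm (x + fun i => (k i : ℝ)))) :=
    Summable.of_nonneg_of_le hnn hle hHasSum.summable
  refine ⟨hsummable, ?_⟩
  calc (∑' k : Fin d → ℤ, η (euclNorm (x + fun i => (k i : ℝ))))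
      ≤ ∑' k, ∫ u in Box k, G u := Summable.tsum_le_tsum hle hsummable hHasSum.summable
    _ = ∫ u, G u := hHasSum.tsum_eq
    _ = ∫ u, g u := hCint

end Statement2Aux

/-- If `η` is positive, bounded, decreasing on `[0,∞)` and `η(|x|)` is summable
on `ℝ^d`, then `∑_{k∈ℤ^d} η(|x+k|) η(|y+k|) ≤ K η(|x-y|/8)` for a constant `K = K(η,d)`. -/
theorem statement2 (d : ℕ) (hd : 0 < d) (η : ℝ → ℝ)
    (hpos : ∀ t, 0 ≤ t → 0 < η t)
    (hbdd : ∃ C : ℝ, ∀ t, 0 ≤ t → η t ≤ C)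
    (hmono : AntitoneOn η (Set.Ici 0))
    (hint : Integrable (fun x : Vec d => η (euclNorm x)) (volume : Measure (Vec d))) :
    ∃ K : ℝ, ∀ x y : Vec d,
      (∑' k : Fin d → ℤ,
          η (euclNorm (x + fun i => (k i : ℝ))) * η (euclNorm (y + fun i => (k i : ℝ)))) ≤
        K * η (euclNorm (x - y) / 8) := by
  obtain ⟨C, hC0, hC⟩ := sum_bound η hpos hmono hint
  refine ⟨2 * C, fun x y => ?_⟩
  set a : (Fin d → ℤ) → ℝ := fun k => η (euclNorm (x + fun i => (k i : ℝ))) with hadef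
  set b : (Fin d → ℤ) → ℝ := fun k => η (euclNorm (y + fun i => (k i : ℝ))) with hbdef
  have hsa := (hC x).1
  have hsb := (hC y).1
  have hta := (hC x).2
  have htb := (hC y).2
  set η2 : ℝ := η (euclNorm (x - y) / 2) with hη2def
  have hη2pos : 0 < η2 := hpos _ (div_nonneg (euclNorm_nonneg _) (by norm_num))
  have hapos : ∀ k, 0 < a k := fun k => hpos _ (euclNorm_nonneg _)
  have hbpos : ∀ k, 0 < b k := fun k => hpos _ (euclNorm_nonneg _)
  have key : ∀ k : Fin d → ℤ, a k * b k ≤ η2 * (a k + b k) := by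
    intro k
    set kr : Vec d := fun i => (k i : ℝ) with hkrdef
    have htri : euclNorm (x - y) ≤ euclNorm (x + kr) + euclNorm (y + kr) := by
      have : x - y = (x + kr) + -(y + kr) := by abel
      rw [this]
      calc euclNorm ((x + kr) + -(y + kr)) ≤ euclNorm (x + kr) + euclNorm (-(y + kr)) :=
            euclNorm_add_le _ _
        _ = euclNorm (x + kr) + euclNorm (y + kr) := by rw [euclNorm_neg]
    rcases le_total (euclNorm (x + kr)) (euclNorm (y + kr)) with h | h
    · -- y + kr is big, so b k ≤ η2
      have hge : euclNorm (x - y) / 2 ≤ euclNorm (y + kr) := by linarith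
      have hbk : b k ≤ η2 := hmono
        (div_nonneg (euclNorm_nonneg _) (by norm_num)) (euclNorm_nonneg _) hge
      nlinarith [hapos k, hbpos k, hη2pos]
    · have hge : euclNorm (x - y) / 2 ≤ euclNorm (x + kr) := by linarith
      have hak : a k ≤ η2 := hmono
        (div_nonneg (euclNorm_nonneg _) (by norm_num)) (euclNorm_nonneg _) hge
      nlinarith [hapos k, hbpos k, hη2pos]
  have hssum : Summable (fun k : Fin d → ℤ => η2 * (a k + b k)) := (hsa.add hsb).mul_left η2
  have hsab : Summable (fun k : Fin d → ℤ => a k * b k) :=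
    Summable.of_nonneg_of_le (fun k => (mul_pos (hapos k) (hbpos k)).le) key hssum
  have h8 : η2 ≤ η (euclNorm (x - y) / 8) :=
    hmono (div_nonneg (euclNorm_nonneg _) (by norm_num))
      (div_nonneg (euclNorm_nonneg _) (by norm_num))
      (by linarith [euclNorm_nonneg (x - y)])
  calc (∑' k : Fin d → ℤ, a k * b k)
      ≤ ∑' k : Fin d → ℤ, η2 * (a k + b k) := Summable.tsum_le_tsum key hsab hssum
    _ = η2 * ((∑' k, a k) + ∑' k, b k) := by rw [tsum_mul_left, Summable.tsum_add hsa hsb]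
    _ ≤ η2 * (2 * C) := by
        have : (∑' k, a k) + ∑' k, b k ≤ 2 * C := by linarith
        exact mul_le_mul_of_nonneg_left this hη2pos.le
    _ ≤ (2 * C) * η (euclNorm (x - y) / 8) := by nlinarith [hpos _ (div_nonneg (euclNorm_nonneg (x - y)) (by norm_num : (0:ℝ) ≤ 8))]

end
end

section
/- Let μ_{0k}, μ̃_{0k}, k = 0,…,m, be complex-valued functions on ℝ^d with Σ_{k=0}^{m} μ_{0k}(x) · conj(μ̃_{0k}(x)) = 1 for all x. Set μ_{0,m+1} ≡ 0 and μ̃_{0,m+1} ≡ 0, and for each ν = 1,…,m+1 define μ̃_{ν,m+1} := conj(μ_{0,m+1−ν}), μ_{ν,m+1} := conj(μ̃_{0,m+1−ν}), and for k = 0,…,m: μ_{νk} := δ_{m+1−ν,k} − μ_{0k} · conj(μ̃_{0,m+1−ν}) and μ̃_{νk} := δ_{m+1−ν,k} − μ̃_{0k} · conj(μ_{0,m+1−ν}). Then the (m+2)×(m+2) matrices ℳ := {μ_{νk}}_{ν,k=0}^{m+1} and ℳ̃ := {μ̃_{νk}}_{ν,k=0}^{m+1} satisfy ℳ · conj(ℳ̃^T)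 = I_{m+2} pointwise. -/
open MeasureTheory Complex Filter Finset

noncomputable section

variable {d : ℕ}

lemma keyA' {ι : Type*} [DecidableEq ι] (s : Finset ι) (q : ι) (hq : q ∈ s)
    (a b : ι → ℂ) (D : ℂ) (hab : ∑ k ∈ s, a k * b k = 1) :
    ∑ k ∈ s, a k * ((if q = k then 1 else 0) - b k * D) = a q - D := by
  simp only [mul_sub, Finset.sum_sub_distrib, mul_ite, mul_one, mul_zero,
    Finset.sum_ite_eq, hq, if_pos, ← mul_assoc, ← Finset.sum_mul, hab, one_mul]

lemma keyB' {ι : Type*} [DecidableEq ι] (s : Finset ι) (p : ι) (hp : p ∈ s)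
    (a b : ι → ℂ) (C : ℂ) (hab : ∑ k ∈ s, a k * b k = 1) :
    ∑ k ∈ s, ((if p = k then 1 else 0) - a k * C) * b k = b p - C := by
  simp only [sub_mul, Finset.sum_sub_distrib, ite_mul, one_mul, zero_mul,
    Finset.sum_ite_eq, hp, if_pos]
  congr 1
  calc ∑ k ∈ s, a k * C * b k = (∑ k ∈ s, a k * b k) * C := by
        rw [Finset.sum_mul]; exact Finset.sum_congr rfl fun k _ => by ring
    _ = C := by rw [hab, one_mul]

lemma keyC' {ι : Type*} [DecidableEq ι] (s : Finset ι) (p q : ι) (hp : p ∈ s) (hq : q ∈ s)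
    (a b : ι → ℂ) (C D : ℂ) (hab : ∑ k ∈ s, a k * b k = 1) :
    ∑ k ∈ s, ((if p = k then 1 else 0) - a k * C) * ((if q = k then 1 else 0) - b k * D)
      = (if p = q then 1 else 0) - b p * D - a q * C + C * D := by
  have T1 : ∑ k ∈ s, (if p = k then (1:ℂ) else 0) * (if q = k then 1 else 0)
      = if p = q then 1 else 0 := by
    simp only [ite_mul, one_mul, zero_mul, Finset.sum_ite_eq, hp, if_pos, eq_comm]
  have T2 : ∑ k ∈ s, (if p = k then (1:ℂ) else 0) * (b k * D) = b p * D := by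
    simp only [ite_mul, one_mul, zero_mul, Finset.sum_ite_eq, hp, if_pos]
  have T3 : ∑ k ∈ s, (a k * C) * (if q = k then (1:ℂ) else 0) = a q * C := by
    simp only [mul_ite, mul_one, mul_zero, Finset.sum_ite_eq, hq, if_pos]
  have T4 : ∑ k ∈ s, (a k * C) * (b k * D) = C * D := by
    calc ∑ k ∈ s, (a k * C) * (b k * D) = (∑ k ∈ s, a k * b k) * (C * D) := by
          rw [Finset.sum_mul]; exact Finset.sum_congr rfl fun k _ => by ring
      _ = C * D := by rw [hab, one_mul]
  calc ∑ k ∈ s, ((if p = k then 1 else 0) - a k * C) * ((if q = k then 1 else 0) - b k * D)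
      = ∑ k ∈ s, ((if p = k then (1:ℂ) else 0) * (if q = k then 1 else 0)
          - (if p = k then (1:ℂ) else 0) * (b k * D)
          - (a k * C) * (if q = k then (1:ℂ) else 0) + (a k * C) * (b k * D)) :=
        Finset.sum_congr rfl fun k _ => by ring
    _ = _ := by
        simp only [Finset.sum_add_distrib, Finset.sum_sub_distrib, T1, T2, T3, T4]


/-- The explicit extension of a biorthogonal pair of rows
`(μ₀₀,…,μ₀ₘ,0)`, `(μ̃₀₀,…,μ̃₀ₘ,0)` to biorthogonal `(m+2)×(m+2)` matrices. -/
theorem statement13 (d m : ℕ) (hm : 0 < m)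
    (μ0 μt0 : Fin (m + 2) → Vec d → ℂ)
    (hlast : μ0 (Fin.last (m + 1)) = 0) (hlastt : μt0 (Fin.last (m + 1)) = 0)
    (hsum : ∀ x, (∑ k, μ0 k x * (starRingEnd ℂ) (μt0 k x)) = 1)
    (E Et : Fin (m + 2) → Fin (m + 2) → Vec d → ℂ)
    (hrow0 : E 0 = μ0) (hrow0t : Et 0 = μt0)
    -- `μ_{ν,m+1} := conj μ̃_{0,m+1-ν}`, `μ̃_{ν,m+1} := conj μ_{0,m+1-ν}`
    (hElast : ∀ ν : Fin (m + 2), ν ≠ 0 → ∀ x,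
      E ν (Fin.last (m + 1)) x = (starRingEnd ℂ) (μt0 (Fin.rev ν) x))
    (hEtlast : ∀ ν : Fin (m + 2), ν ≠ 0 → ∀ x,
      Et ν (Fin.last (m + 1)) x = (starRingEnd ℂ) (μ0 (Fin.rev ν) x))
    -- `μ_{νk} := δ_{m+1-ν,k} - μ₀ₖ conj μ̃_{0,m+1-ν}`, `μ̃_{νk} := δ_{m+1-ν,k} - μ̃₀ₖ conj μ_{0,m+1-ν}`
    (hE : ∀ ν : Fin (m + 2), ν ≠ 0 → ∀ k : Fin (m + 2), k ≠ Fin.last (m + 1) → ∀ x,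
      E ν k x = (if Fin.rev ν = k then 1 else 0) - μ0 k x * (starRingEnd ℂ) (μt0 (Fin.rev ν) x))
    (hEt : ∀ ν : Fin (m + 2), ν ≠ 0 → ∀ k : Fin (m + 2), k ≠ Fin.last (m + 1) → ∀ x,
      Et ν k x = (if Fin.rev ν = k then 1 else 0) -
        μt0 k x * (starRingEnd ℂ) (μ0 (Fin.rev ν) x)) :
    ∀ x : Vec d, ∀ ν ρ : Fin (m + 2),
      (∑ k, E ν k x * (starRingEnd ℂ) (Et ρ k x)) = if ν = ρ then 1 else 0 := by
  intro x ν ρ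
  set L := Fin.last (m + 1) with hLdef
  have hmemL : L ∈ (Finset.univ : Finset (Fin (m + 2))) := Finset.mem_univ L
  have hsum' : ∑ k ∈ Finset.univ.erase L, μ0 k x * (starRingEnd ℂ) (μt0 k x) = 1 := by
    rw [Finset.sum_erase _ (by simp [hlast])]
    exact hsum x
  have hrevmem : ∀ σ : Fin (m + 2), σ ≠ 0 → Fin.rev σ ∈ Finset.univ.erase L := by
    intro σ hσ
    refine Finset.mem_erase.2 ⟨?_, Finset.mem_univ _⟩
    rw [hLdef, ← Fin.rev_zero]
    exact fun h => hσ (Fin.rev_injective h)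
  by_cases hν : ν = 0 <;> by_cases hρ : ρ = 0
  · subst hν; subst hρ
    rw [hrow0, hrow0t, hsum x]
    simp
  · subst hν
    rw [hrow0, ← Finset.sum_erase_add _ _ hmemL]
    have hLt : μ0 L x * (starRingEnd ℂ) (Et ρ L x) = 0 := by rw [hlast]; simp
    rw [hLt, add_zero]
    rw [Finset.sum_congr rfl (fun k hk => by
      rw [hEt ρ hρ k (Finset.ne_of_mem_erase hk) x, map_sub, map_mul, Complex.conj_conj,
        apply_ite (starRingEnd ℂ), map_one, map_zero])]
    rw [keyA' _ _ (hrevmem ρ hρ) _ (fun k => (starRingEnd ℂ) (μt0 k x)) _ hsum']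
    rw [if_neg (fun h : (0 : Fin (m + 2)) = ρ => hρ h.symm)]
    exact sub_self _
  · subst hρ
    rw [hrow0t, ← Finset.sum_erase_add _ _ hmemL]
    have hLt : E ν L x * (starRingEnd ℂ) (μt0 L x) = 0 := by rw [hlastt]; simp
    rw [hLt, add_zero]
    rw [Finset.sum_congr rfl (fun k hk => by
      rw [hE ν hν k (Finset.ne_of_mem_erase hk) x])]
    rw [keyB' _ _ (hrevmem ν hν) (fun k => μ0 k x) _ _ hsum', if_neg hν]
    exact sub_self _
  · rw [← Finset.sum_erase_add _ _ hmemL]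
    have hLt : E ν L x * (starRingEnd ℂ) (Et ρ L x)
        = (starRingEnd ℂ) (μt0 (Fin.rev ν) x) * μ0 (Fin.rev ρ) x := by
      rw [hElast ν hν, hEtlast ρ hρ, Complex.conj_conj]
    rw [hLt]
    rw [Finset.sum_congr rfl (fun k hk => by
      rw [hE ν hν k (Finset.ne_of_mem_erase hk) x,
        hEt ρ hρ k (Finset.ne_of_mem_erase hk) x, map_sub, map_mul, Complex.conj_conj,
        apply_ite (starRingEnd ℂ), map_one, map_zero])]
    rw [keyC' _ _ _ (hrevmem ν hν) (hrevmem ρ hρ) _ (fun k => (starRingEnd ℂ) (μt0 k x)) _ _ hsum']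
    simp only [Fin.rev_inj]
    ring

end
end
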